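/- arXiv:1310.0898 — 15 statements merged into one kernel-verified Lean document; each statement's English description precedes it below -/
import Mathlib

section
/- For any fixed positive integer b with b ≠ 3, there are only finitely many positive integers n satisfying σ₂(n) − n² = b·n, i.e., the sum of the squares of the proper divisors of n equals b·n. -/
/-- Vieta jumping: for `b ≠ 3`, the equation `p² + q² + 1 = b·p·q` has no
positive solutions. -/
lemma vieta_aux (b : ℕ) (hb3 : b ≠ 3) : ∀ s p q : ℕ, p + q ≤ s → 0 < p → 0 < q →
    p ^ 2 + q ^ 2 + 1 ≠ b * (p * q) := by
  intro s
  induction s using Nat.strong_induction_on with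
  | _ s ih =>
    intro p q hs hp hq heq
    wlog hpq : p ≤ q with H
    · exact H b hb3 s ih q p (by omega) hq hp (by linarith [heq, mul_comm p q]) (by omega)
    rcases eq_or_lt_of_le hpq with rfl | hlt
    · -- p = q case
      rcases Nat.lt_or_ge b 3 with h | h
      · nlinarith
      · rcases Nat.lt_or_ge b 4 with h4 | h4
        · omega
        · nlinarith
    · -- p < q case
      have hqbp : q < b * p := by nlinarith
      set q' := b * p - q with hq'def
      have hsum : q + q' = b * p := by omega
      have hmul : q * q' = p ^ 2 + 1 := by nlinarith [Nat.sub_add_cancel (le_of_lt hqbp)]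
      have hq'pos : 0 < q' := by
        rcases Nat.eq_zero_or_pos q' with h0 | h0
        · rw [h0, mul_zero] at hmul; omega
        · exact h0
      have hq'le : q' ≤ p := by nlinarith
      have heq2 : q' ^ 2 + p ^ 2 + 1 = b * (q' * p) := by nlinarith
      exact ih (q' + p) (by omega) q' p le_rfl hq'pos hp heq2

/-- For any fixed positive integer `b ≠ 3`, there are only finitely many positive
integers `n` with `σ₂(n) - n² = b·n`, i.e. the sum of squares of proper divisors
of `n` equals `b·n`. -/
theorem stmt_0 (b : ℕ) (hb : 0 < b) (hb3 : b ≠ 3) :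
    {n : ℕ | 0 < n ∧ ArithmeticFunction.sigma 2 n = n ^ 2 + b * n}.Finite := by
  apply Set.Finite.subset (Set.finite_Icc 0 (b ^ 3))
  rintro n ⟨hn0, hσ⟩
  simp only [Set.mem_Icc]
  refine ⟨Nat.zero_le _, ?_⟩
  have hn0' : n ≠ 0 := hn0.ne'
  have hprod := Nat.prod_primeFactorsList hn0'
  have hsorted := Nat.primeFactorsList_sorted n
  rcases hlist : n.primeFactorsList with _ | ⟨p, _ | ⟨q, _ | ⟨r, rest⟩⟩⟩
  · -- n = 1
    have : n = 1 := by
      rcases (Nat.primeFactorsList_eq_nil n).mp hlist with h | h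
      · omega
      · exact h
    subst this
    simp [ArithmeticFunction.sigma_apply] at hσ
    omega
  · -- n prime
    rw [hlist] at hprod
    simp at hprod
    have hp : p.Prime := Nat.prime_of_mem_primeFactorsList (by rw [hlist]; simp)
    have hp2 := hp.two_le
    subst hprod
    rw [ArithmeticFunction.sigma_apply, hp.divisors,
      Finset.sum_pair (by omega : (1:ℕ) ≠ p)] at hσ
    nlinarith
  · -- n = p * q, semiprime
    rw [hlist] at hprod
    simp at hprod
    have hp : p.Prime := Nat.prime_of_mem_primeFactorsList (by rw [hlist]; simp)
    have hq : q.Prime := Nat.prime_of_mem_primeFactorsList (by rw [hlist]; simp)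
    have hp2 := hp.two_le
    have hq2 := hq.two_le
    rcases eq_or_ne p q with rfl | hne
    · -- n = p^2
      have hn : n = p ^ 2 := by rw [← hprod]; ring
      rw [hn, ArithmeticFunction.sigma_apply, Nat.sum_divisors_prime_pow hp] at hσ
      simp [Finset.sum_range_succ] at hσ
      rcases Nat.lt_or_ge b 2 with h | h
      · interval_cases b <;> nlinarith
      · nlinarith
    · -- p ≠ q
      have hcop : p.Coprime q := (Nat.coprime_primes hp hq).mpr hne
      have hmul := ArithmeticFunction.isMultiplicative_sigma (k := 2) |>.map_mul_of_coprime hcop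
      rw [← hprod, hmul, ArithmeticFunction.sigma_apply, ArithmeticFunction.sigma_apply,
        hp.divisors, hq.divisors, Finset.sum_pair (by omega : (1:ℕ) ≠ p),
        Finset.sum_pair (by omega : (1:ℕ) ≠ q)] at hσ
      have heq : p ^ 2 + q ^ 2 + 1 = b * (p * q) := by nlinarith
      exact absurd heq (vieta_aux b hb3 (p + q) p q le_rfl (by omega) (by omega))
  · -- at least three prime factors
    rw [hlist] at hprod hsorted
    have hp : p.Prime := Nat.prime_of_mem_primeFactorsList (by rw [hlist]; simp)
    have hq : q.Prime := Nat.prime_of_mem_primeFactorsList (by rw [hlist]; simp)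
    have hr : r.Prime := Nat.prime_of_mem_primeFactorsList (by rw [hlist]; simp)
    have hpq : p ≤ q := (List.pairwise_cons.mp hsorted.pairwise).1 q (by simp)
    have hpr : p ≤ r := (List.pairwise_cons.mp hsorted.pairwise).1 r (by simp)
    obtain ⟨m, hm⟩ : ∃ m, m = q * (r * rest.prod) := ⟨_, rfl⟩
    have hrestpos : 0 < rest.prod := by
      apply List.prod_pos
      intro a ha
      exact (Nat.prime_of_mem_primeFactorsList (by rw [hlist]; simp [ha])).pos
    have hnm : n = p * m := by
      rw [← hprod, List.prod_cons, List.prod_cons, List.prod_cons, hm]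
    have hp2 := hp.two_le
    have hq2 := hq.two_le
    have hr2 := hr.two_le
    have hmge : p ^ 2 ≤ m := by
      calc p ^ 2 = p * p * 1 := by ring
        _ ≤ q * r * rest.prod := Nat.mul_le_mul (Nat.mul_le_mul hpq hpr) hrestpos
        _ = m := by rw [hm]; ring
    have hmpos : 0 < m := by nlinarith
    have hmlt : m < n := by nlinarith
    -- m and n are distinct divisors of n, so m² + n² ≤ σ₂ n
    have hsub : ({m, n} : Finset ℕ) ⊆ n.divisors := by
      intro d hd
      rcases Finset.mem_insert.mp hd with rfl | hd
      · exact Nat.mem_divisors.mpr ⟨⟨p, by rw [hnm]; ring⟩, hn0'⟩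
      · rw [Finset.mem_singleton.mp hd]
        exact Nat.mem_divisors_self n hn0'
    have hle : m ^ 2 + n ^ 2 ≤ ArithmeticFunction.sigma 2 n := by
      rw [ArithmeticFunction.sigma_apply]
      calc m ^ 2 + n ^ 2 = ∑ d ∈ ({m, n} : Finset ℕ), d ^ 2 :=
            (Finset.sum_pair (f := fun d => d ^ 2) hmlt.ne).symm
        _ ≤ ∑ d ∈ n.divisors, d ^ 2 := Finset.sum_le_sum_of_subset hsub
    have hbn : m ^ 2 ≤ b * n := by omega
    rw [hnm] at hbn
    have hmbp : m ≤ b * p := by nlinarith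
    have hpb : p ≤ b := by nlinarith
    have hm2 : m ≤ b * b := hmbp.trans (Nat.mul_le_mul_left b hpb)
    calc n = p * m := hnm
      _ ≤ b * (b * b) := Nat.mul_le_mul hpb hm2
      _ = b ^ 3 := by ring
end

section
/- There is no positive integer n satisfying σ₂(n) − n² = 2n, i.e., no positive integer n whose sum of squares of proper divisors equals 2n. -/
/-- There is no positive integer `n` with `σ₂(n) - n² = 2n`. -/
theorem stmt_2 : ¬ ∃ n : ℕ, 0 < n ∧ ArithmeticFunction.sigma 2 n = n ^ 2 + 2 * n := by
  rintro ⟨n, hn, h⟩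
  rw [ArithmeticFunction.sigma_apply] at h
  have hn0 : n ≠ 0 := hn.ne'
  have hP : ∑ d ∈ n.properDivisors, d ^ 2 = 2 * n := by
    rw [← Nat.insert_self_properDivisors hn0,
      Finset.sum_insert Nat.self_notMem_properDivisors] at h
    omega
  rcases eq_or_ne n 1 with rfl | hn1
  · simp at hP
  obtain ⟨p, hpg⟩ : ∃ p, p = n.minFac := ⟨_, rfl⟩
  have hpp : p.Prime := hpg ▸ Nat.minFac_prime hn1
  have hpd : p ∣ n := hpg ▸ Nat.minFac_dvd n
  have hple : ∀ q, 2 ≤ q → q ∣ n → p ≤ q := fun q h2 hq => hpg ▸ Nat.minFac_le_of_dvd h2 hq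
  have hp2 : 2 ≤ p := hpp.two_le
  obtain ⟨m, hnm⟩ : ∃ m, n = p * m := hpd
  have hpd2 : p ∣ n := ⟨m, hnm⟩
  have hn2 : 2 ≤ n := by omega
  rcases Nat.lt_or_ge m 2 with hm1 | hm2
  · -- m = 0 or 1 : n prime
    interval_cases m
    · omega
    · have hprime : n.Prime := by rwa [show n = p by omega]
      rw [hprime.properDivisors] at hP
      simp at hP
      omega
  · have hmd : m ∣ n := Dvd.intro_left _ hnm.symm
    have hmn : m < n := by nlinarith
    have hsub : ({1, m} : Finset ℕ) ⊆ n.properDivisors := by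
      intro d hd
      simp only [Finset.mem_insert, Finset.mem_singleton] at hd
      rcases hd with rfl | rfl
      · exact Nat.mem_properDivisors.2 ⟨one_dvd _, by omega⟩
      · exact Nat.mem_properDivisors.2 ⟨hmd, hmn⟩
    have hb : 1 + m ^ 2 ≤ 2 * n := by
      have := Finset.sum_le_sum_of_subset (f := fun d => d ^ 2) hsub
      rw [Finset.sum_pair (by omega), hP] at this
      simpa using this
    have hpm : p ≤ m := hple m hm2 hmd
    have hm2p : m < 2 * p := by nlinarith
    have hmprime : m.Prime := by
      by_contra hc
      have h1 : m.minFac ^ 2 ≤ m := Nat.minFac_sq_le_self (by omega) hc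
      have h3 : p ≤ m.minFac :=
        hple _ (Nat.minFac_prime (by omega)).two_le ((Nat.minFac_dvd m).trans hmd)
      nlinarith
    rcases eq_or_ne m p with rfl | hne
    · -- n = p^2
      have hnsq : n = m ^ 2 := by rw [hnm]; ring
      rw [hnsq, Nat.sum_divisors_prime_pow hpp] at h
      simp [Finset.sum_range_succ] at h
      nlinarith
    · -- n = p * q, distinct primes
      have hplt : p < m := lt_of_le_of_ne hpm (Ne.symm hne)
      have hpn : p < n := by nlinarith
      have hsub3 : ({1, p, m} : Finset ℕ) ⊆ n.properDivisors := by
        intro d hd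
        simp only [Finset.mem_insert, Finset.mem_singleton] at hd
        rcases hd with rfl | rfl | rfl
        · exact Nat.mem_properDivisors.2 ⟨one_dvd _, by omega⟩
        · exact Nat.mem_properDivisors.2 ⟨hpd2, hpn⟩
        · exact Nat.mem_properDivisors.2 ⟨hmd, hmn⟩
      have hb3 : 1 + p ^ 2 + m ^ 2 ≤ 2 * n := by
        have := Finset.sum_le_sum_of_subset (f := fun d => d ^ 2) hsub3
        rw [hP] at this
        rw [Finset.sum_insert (by simp; omega), Finset.sum_pair (by omega)] at this
        simpa [add_assoc] using this
      nlinarith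
end

section
/- A positive integer n satisfies σ₂(n) − n² = 3n (i.e., n is an F-perfect number) if and only if there exists k ≥ 1 such that n = F_{2k−1}·F_{2k+1}, where both F_{2k−1} and F_{2k+1} are prime numbers. -/
open ArithmeticFunction

lemma catalanId (m : ℕ) : (Nat.fib (m+1) : ℤ)^2 = Nat.fib m * Nat.fib (m+2) + (-1)^m := by
  induction m with
  | zero => simp
  | succ m ih =>
    have h1 : (Nat.fib (m+2) : ℤ) = Nat.fib m + Nat.fib (m+1) := by
      exact_mod_cast congrArg (Nat.cast (R := ℤ)) (Nat.fib_add_two (n := m))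
    have h2 : (Nat.fib (m+3) : ℤ) = Nat.fib (m+1) + Nat.fib (m+2) := by
      exact_mod_cast congrArg (Nat.cast (R := ℤ)) (Nat.fib_add_two (n := m+1))
    have h3 : (Nat.fib (m+1+2) : ℤ) = Nat.fib (m+1) + Nat.fib (m+2) := h2
    rw [h3]
    linear_combination (-1 : ℤ) * ih + (Nat.fib (m+2) : ℤ) * h1

lemma fibId (k : ℕ) (hk : 1 ≤ k) :
    Nat.fib (2*k-1)^2 + Nat.fib (2*k+1)^2 + 1 = 3 * (Nat.fib (2*k-1) * Nat.fib (2*k+1)) := by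
  obtain ⟨j, rfl⟩ := Nat.exists_eq_add_of_le hk
  have hidx : 2 * (1 + j) - 1 = 2*j+1 := by omega
  have hidx2 : 2 * (1 + j) + 1 = 2*j+3 := by omega
  rw [hidx, hidx2]
  have hc := catalanId (2*j+1)
  have h1 : (Nat.fib (2*j+3) : ℤ) = Nat.fib (2*j+1) + Nat.fib (2*j+2) := by
    exact_mod_cast congrArg (Nat.cast (R := ℤ)) (Nat.fib_add_two (n := 2*j+1))
  have hodd : ((-1:ℤ))^(2*j+1) = -1 := by
    rw [pow_succ, pow_mul]; norm_num
  rw [hodd] at hc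
  have key : (Nat.fib (2*j+1) : ℤ)^2 + (Nat.fib (2*j+3):ℤ)^2 + 1
      = 3 * (Nat.fib (2*j+1) * Nat.fib (2*j+3)) := by
    have h3 : (Nat.fib (2*j+1+2) : ℤ) = Nat.fib (2*j+3) := by norm_num
    rw [h3] at hc
    nlinarith [hc, h1]
  exact_mod_cast key

lemma descent : ∀ q p : ℕ, p ≤ q → p^2 + q^2 + 1 = 3*(p*q) →
    (p = 1 ∧ q = 1) ∨ ∃ k, 1 ≤ k ∧ p = Nat.fib (2*k-1) ∧ q = Nat.fib (2*k+1) := by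
  intro q
  induction q using Nat.strong_induction_on with
  | _ q ih =>
    intro p hpq heq
    have hp0 : 0 < p := by nlinarith
    have hq0 : 0 < q := by omega
    rcases eq_or_lt_of_le hpq with rfl | hlt
    · left; constructor <;> nlinarith
    · have hq3p : q < 3 * p := by nlinarith
      set q' := 3 * p - q with hq'
      have hsum : q' + q = 3 * p := by omega
      have hmul : q' * q = p^2 + 1 := by
        have h : q' * q + q * q = 3 * (p * q) := by
          rw [← add_mul, hsum]; ring
        nlinarith [h]
      have hq'pos : 0 < q' := Nat.pos_of_ne_zero fun h => by
        rw [h] at hmul; simp at hmul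
      have hq'le : q' ≤ p := by
        by_contra h
        push_neg at h
        nlinarith [hmul]
      have heq' : q'^2 + p^2 + 1 = 3*(q'*p) := by nlinarith [hmul, hsum]
      rcases ih p hlt q' hq'le heq' with ⟨h1, h2⟩ | ⟨k, hk, hq'f, hpf⟩
      · right; exact ⟨1, le_refl 1, by simpa using h2, by
          have : q = 2 := by omega
          simp [this, Nat.fib]⟩
      · right
        refine ⟨k + 1, by omega, ?_, ?_⟩
        · have : 2 * (k+1) - 1 = 2*k+1 := by omega
          rw [this]; exact hpf
        · have hi : 2 * (k+1) + 1 = (2*k+1) + 2 := by omega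
          rw [hi, Nat.fib_add_two]
          have h2 : Nat.fib (2*k+1) = Nat.fib (2*k-1) + Nat.fib (2*k) := by
            have h5 : 2*k+1 = (2*k-1)+2 := by omega
            rw [h5, Nat.fib_add_two]
            have e : 2*k-1+1 = 2*k := by omega
            rw [e]
          have h4 : Nat.fib ((2*k+1)+1) = Nat.fib (2*k) + Nat.fib (2*k+1) := by
            have h5 : (2*k+1)+1 = (2*k-1)+1+2 := by omega
            rw [h5, Nat.fib_add_two]
            have e1 : 2*k-1+1 = 2*k := by omega
            rw [e1]
          omega

lemma sigma2_prime {p : ℕ} (hp : p.Prime) : ArithmeticFunction.sigma 2 p = 1 + p^2 := by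
  have := sigma_apply_prime_pow (k := 2) (i := 1) hp
  simpa [Finset.sum_range_succ] using this

lemma sigma2_prime_sq {p : ℕ} (hp : p.Prime) :
    ArithmeticFunction.sigma 2 (p^2) = 1 + p^2 + p^4 := by
  have := sigma_apply_prime_pow (k := 2) (i := 2) hp
  rw [this, Finset.sum_range_succ, Finset.sum_range_succ, Finset.sum_range_one]
  norm_num

/-- A positive integer `n` satisfies `σ₂(n) - n² = 3n` (is `F`-perfect) iff
`n = F_{2k-1} · F_{2k+1}` for some `k ≥ 1` with both factors Fibonacci primes. -/
theorem stmt_3 (n : ℕ) (hn : 0 < n) :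
    ArithmeticFunction.sigma 2 n = n ^ 2 + 3 * n ↔
      ∃ k : ℕ, 1 ≤ k ∧ n = Nat.fib (2 * k - 1) * Nat.fib (2 * k + 1) ∧
        (Nat.fib (2 * k - 1)).Prime ∧ (Nat.fib (2 * k + 1)).Prime := by
  constructor
  · intro h
    have hn1 : n ≠ 1 := by
      rintro rfl
      simp [ArithmeticFunction.sigma_apply] at h
    obtain ⟨p, hpdef⟩ : ∃ p, p = n.minFac := ⟨_, rfl⟩
    have hp : p.Prime := hpdef ▸ Nat.minFac_prime hn1
    have hpd : p ∣ n := hpdef ▸ Nat.minFac_dvd n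
    obtain ⟨m, hmdef⟩ : ∃ m, m = n / p := ⟨_, rfl⟩
    have hnm : p * m = n := hmdef ▸ Nat.mul_div_cancel' hpd
    have hmd : m ∣ n := ⟨p, by rw [← hnm]; ring⟩
    have hmlt : m < n := hmdef ▸ Nat.div_lt_self hn hp.one_lt
    have hm0 : 0 < m := by
      rcases Nat.eq_zero_or_pos m with h0 | h0
      · rw [h0, mul_zero] at hnm; omega
      · exact h0
    -- key bound : m ≤ 3 * p
    have hbound : m ^ 2 + n ^ 2 ≤ ArithmeticFunction.sigma 2 n := by
      rw [ArithmeticFunction.sigma_apply]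
      have hsub : ({m, n} : Finset ℕ) ⊆ n.divisors := by
        intro x hx
        simp only [Finset.mem_insert, Finset.mem_singleton] at hx
        rcases hx with rfl | rfl
        · exact Nat.mem_divisors.2 ⟨hmd, by omega⟩
        · exact Nat.mem_divisors.2 ⟨dvd_refl _, by omega⟩
      calc m ^ 2 + n ^ 2 = ∑ d ∈ ({m, n} : Finset ℕ), d ^ 2 :=
            (Finset.sum_pair (f := fun d => d ^ 2) (ne_of_lt hmlt)).symm
        _ ≤ ∑ d ∈ n.divisors, d ^ 2 := Finset.sum_le_sum_of_subset hsub
    have hm3p : m ≤ 3 * p := by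
      have h1 : m ^ 2 ≤ 3 * n := by omega
      have h2 : m * m ≤ 3 * p * m := by
        rw [← hnm] at h1; nlinarith [h1]
      exact Nat.le_of_mul_le_mul_right (by nlinarith [h2]) hm0
    by_cases hm1 : m = 1
    · -- n = p prime
      exfalso
      subst hm1
      rw [mul_one] at hnm
      rw [← hnm, sigma2_prime hp] at h
      nlinarith [hp.two_le]
    by_cases hmp : m.Prime
    · by_cases hme : m = p
      · -- n = p^2
        exfalso
        subst hme
        have hn2 : n = m ^ 2 := by rw [← hnm]; ring
        rw [hn2, sigma2_prime_sq hp] at h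
        nlinarith [hp.two_le]
      · -- n = p * m distinct primes
        have hcop : Nat.Coprime p m := (Nat.coprime_primes hp hmp).2 (Ne.symm hme)
        have hσ : ArithmeticFunction.sigma 2 n
            = (1 + p^2) * (1 + m^2) := by
          rw [← hnm, (ArithmeticFunction.isMultiplicative_sigma (k := 2)).map_mul_of_coprime hcop,
            sigma2_prime hp, sigma2_prime hmp]
        rw [hσ, ← hnm] at h
        have heq : p^2 + m^2 + 1 = 3*(p*m) := by nlinarith [h]
        have hpm : p ≤ m := hpdef ▸ Nat.minFac_le_of_dvd hmp.two_le hmd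
        rcases descent m p hpm heq with ⟨h1, _⟩ | ⟨k, hk, hpf, hmf⟩
        · exact absurd h1 hp.one_lt.ne'
        · exact ⟨k, hk, by rw [← hnm, hpf, hmf], by rw [← hpf]; exact hp, by rw [← hmf]; exact hmp⟩
    · -- m composite : contradiction
      exfalso
      have hm2 : 2 ≤ m := by omega
      obtain ⟨a, ha, ha2, halt⟩ := Nat.exists_dvd_of_not_prime2 hm2 hmp
      have hbd : a * (m / a) = m := Nat.mul_div_cancel' ha
      set b := m / a with hbdef
      have hb2 : 2 ≤ b := by
        rcases Nat.lt_or_ge b 2 with hb | hb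
        · interval_cases b <;> omega
        · exact hb
      have hbm : b ∣ m := ⟨a, by rw [← hbd]; ring⟩
      have hpa : p ≤ a := hpdef ▸ Nat.minFac_le_of_dvd ha2 (ha.trans hmd)
      have hpb : p ≤ b := hpdef ▸ Nat.minFac_le_of_dvd hb2 (hbm.trans hmd)
      have hpp : p * p ≤ m := by calc p * p ≤ a * b := Nat.mul_le_mul hpa hpb
                                    _ = m := hbd
      have hp3 : p ≤ 3 := by nlinarith [hp.two_le]
      -- so n = p * m ≤ 27
      have hp2 := hp.two_le
      interval_cases p
      · -- p = 2, 4 ≤ m ≤ 6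
        interval_cases m
        · -- m = 4, n = 8
          rw [← hnm] at h; norm_num at h
          rw [(by decide : ArithmeticFunction.sigma 2 8 = 85)] at h
          omega
        · -- m = 5 is prime
          exact hmp (by norm_num)
        · -- m = 6, n = 12
          rw [← hnm] at h; norm_num at h
          rw [(by decide : ArithmeticFunction.sigma 2 12 = 210)] at h
          omega
      · -- p = 3, m = 9
        interval_cases m
        · rw [← hnm] at h; norm_num at h
          rw [(by decide : ArithmeticFunction.sigma 2 27 = 820)] at h
          omega
  · rintro ⟨k, hk, rfl, hpp, hqp⟩
    obtain ⟨p, hpe⟩ : ∃ p, p = Nat.fib (2*k-1) := ⟨_, rfl⟩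
    obtain ⟨q, hqe⟩ : ∃ q, q = Nat.fib (2*k+1) := ⟨_, rfl⟩
    rw [← hpe] at hpp
    rw [← hqe] at hqp
    rw [← hpe, ← hqe]
    have hid : p^2 + q^2 + 1 = 3 * (p * q) := by rw [hpe, hqe]; exact fibId k hk
    have hne : p ≠ q := by
      rintro rfl
      have : p = 1 := by nlinarith
      exact hpp.one_lt.ne' this
    have hcop : Nat.Coprime p q := (Nat.coprime_primes hpp hqp).2 hne
    rw [(ArithmeticFunction.isMultiplicative_sigma (k := 2)).map_mul_of_coprime hcop,
      sigma2_prime hpp, sigma2_prime hqp]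
    have expand : (1 + p^2) * (1 + q^2) = p^2 * q^2 + (p^2 + q^2 + 1) := by ring
    rw [expand, hid]
    ring
end

section
/- For any fixed integers a ≥ 3 and b ≥ 1, there are only finitely many positive integers n satisfying σ_a(n) − n^a = b·n, i.e., the sum of the a-th powers of the proper divisors of n equals b·n. -/
/-- For fixed `a ≥ 3` and `b ≥ 1`, only finitely many positive integers `n`
satisfy `σ_a(n) - n^a = b·n`. -/
theorem stmt_4 (a b : ℕ) (ha : 3 ≤ a) (hb : 1 ≤ b) :
    {n : ℕ | 0 < n ∧ ArithmeticFunction.sigma a n = n ^ a + b * n}.Finite := by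
  apply Set.Finite.subset (Set.finite_Iic (b ^ 2))
  rintro n ⟨hn, heq⟩
  simp only [Set.mem_Iic]
  by_contra hcon
  push_neg at hcon
  have hb2 : 1 ≤ b ^ 2 := Nat.one_le_pow _ _ hb
  have hn1 : 1 < n := lt_of_le_of_lt hb2 hcon
  rw [ArithmeticFunction.sigma_apply] at heq
  by_cases hp : n.Prime
  · rw [hp.divisors, Finset.sum_insert (by simp only [Finset.mem_singleton]; omega),
      Finset.sum_singleton, one_pow] at heq
    have h1 : b * n = 1 := by omega
    nlinarith
  · set p := n.minFac with hpdef
    have hpp : p.Prime := Nat.minFac_prime (by omega)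
    have hpd : p ∣ n := Nat.minFac_dvd n
    set d := n / p with hddef
    have hdn : d ∣ n := Nat.div_dvd_of_dvd hpd
    have hnd : n = p * d := (Nat.mul_div_cancel' hpd).symm
    have hpsq : p * p ≤ n := by
      have := Nat.minFac_sq_le_self hn hp
      nlinarith [this]
    have hpled : p ≤ d := by
      have : p * p ≤ p * d := by omega
      exact Nat.le_of_mul_le_mul_left this hpp.pos
    have hdd : n ≤ d * d := by nlinarith [hpp.two_le]
    have hd1 : 1 < d := by nlinarith [hpp.two_le]
    have hdltn : d < n := by nlinarith [hpp.two_le]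
    have hbd : b < d := by nlinarith
    -- {1, d, n} ⊆ divisors
    have hsub : ({1, d, n} : Finset ℕ) ⊆ n.divisors := by
      intro x hx
      simp only [Finset.mem_insert, Finset.mem_singleton] at hx
      rcases hx with rfl | rfl | rfl
      · exact Nat.one_mem_divisors.mpr (by omega)
      · exact Nat.mem_divisors.mpr ⟨hdn, by omega⟩
      · exact Nat.mem_divisors.mpr ⟨dvd_rfl, by omega⟩
    have hsum : ∑ x ∈ ({1, d, n} : Finset ℕ), x ^ a ≤ ∑ x ∈ n.divisors, x ^ a :=
      Finset.sum_le_sum_of_subset hsub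
    have hm1 : (1 : ℕ) ∉ ({d, n} : Finset ℕ) := by
      simp only [Finset.mem_insert, Finset.mem_singleton]
      omega
    have hm2 : d ∉ ({n} : Finset ℕ) := by
      simp only [Finset.mem_singleton]
      omega
    rw [Finset.sum_insert hm1, Finset.sum_insert hm2, Finset.sum_singleton, one_pow] at hsum
    have hd3 : d ^ 3 ≤ d ^ a := Nat.pow_le_pow_right (by omega) ha
    have : b * n < d ^ 3 := by
      have : d ^ 3 = d * (d * d) := by ring
      nlinarith
    omega
end

section
/- If n = p·q where p < q are primes and n divides σ₃(n), then n = 6. -/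
theorem no_mutual : ∀ a : ℕ, 2 ≤ a → ∀ b : ℕ, a < b →
    ((b:ℤ) ∣ (a:ℤ)^2 - a + 1) → ((a:ℤ) ∣ (b:ℤ)^2 - b + 1) → False := by
  intro a
  induction a using Nat.strong_induction_on with
  | _ a IH =>
    intro ha2 b hab hba hab2
    obtain ⟨c, hc⟩ := hba
    have haZ : (2:ℤ) ≤ a := by exact_mod_cast ha2
    have hbZ : (a:ℤ) < b := by exact_mod_cast hab
    have hcpos : 0 < c := by nlinarith
    have hclt : c < (a:ℤ) := by nlinarith
    have hc1 : c ≠ 1 := by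
      rintro rfl
      have hb : (b:ℤ) = (a:ℤ)^2 - a + 1 := by linarith
      have hd : (a:ℤ) ∣ 1 := by
        have h2 : (a:ℤ) ∣ ((b:ℤ)^2 - b + 1) - a*((a:ℤ)^3 - 2*a^2 + 2*a - 1) :=
          dvd_sub hab2 ⟨_, rfl⟩
        have he : ((b:ℤ)^2 - b + 1) - a*((a:ℤ)^3 - 2*a^2 + 2*a - 1) = 1 := by
          rw [hb]; ring
        rwa [he] at h2
      have := Int.le_of_dvd one_pos hd
      omega
    have hc2 : 2 ≤ c := by omega
    obtain ⟨k, hkk⟩ : (a:ℤ) ∣ b*c - 1 := ⟨a - 1, by linarith⟩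
    have hcop : IsCoprime (a:ℤ) (b:ℤ) := ⟨-k, c, by linarith⟩
    have hdd : (a:ℤ) ∣ (b:ℤ)^2 * ((c:ℤ)^2 - c + 1) := by
      have he : (b:ℤ)^2 * ((c:ℤ)^2 - c + 1) = ((b:ℤ)^2 - b + 1) + (b*c - 1)*(b*c - b + 1) := by
        ring
      rw [he, hkk]
      exact dvd_add hab2 ⟨k*(b*c - b + 1), by ring⟩
    have hfin : (a:ℤ) ∣ (c:ℤ)^2 - c + 1 := (hcop.pow_right).dvd_of_dvd_mul_left hdd
    lift c to ℕ using le_of_lt hcpos with c' hc'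
    exact IH c' (by exact_mod_cast hclt) (by exact_mod_cast hc2) a
      (by exact_mod_cast hclt) hfin ⟨b, by linarith⟩

/-- If `n = p·q` with primes `p < q` and `n ∣ σ₃(n)`, then `n = 6`. -/
theorem stmt_6 (n p q : ℕ) (hp : p.Prime) (hq : q.Prime) (hpq : p < q)
    (hn : n = p * q) (hdvd : n ∣ ArithmeticFunction.sigma 3 n) : n = 6 := by
  subst hn
  have hσ : ArithmeticFunction.sigma 3 (p*q) = (1+p^3)*(1+q^3) := by
    rw [ArithmeticFunction.isMultiplicative_sigma.map_mul_of_coprime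
      ((Nat.coprime_primes hp hq).mpr hpq.ne)]
    rw [ArithmeticFunction.sigma_apply, hp.divisors, Finset.sum_pair hp.one_lt.ne]
    rw [ArithmeticFunction.sigma_apply, hq.divisors, Finset.sum_pair hq.one_lt.ne]
    ring
  rw [hσ] at hdvd
  have hp3 : p ∣ 1 + q^3 := by
    rcases hp.dvd_mul.mp (dvd_trans (dvd_mul_right p q) hdvd) with h | h
    · exfalso
      have h1 : p ∣ 1 := (Nat.dvd_add_right (dvd_pow_self p (by norm_num : (3:ℕ) ≠ 0))).mp
        (by rwa [Nat.add_comm] at h)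
      have := Nat.le_of_dvd one_pos h1
      have := hp.two_le
      omega
    · exact h
  have hq3 : q ∣ 1 + p^3 := by
    rcases hq.dvd_mul.mp (dvd_trans (dvd_mul_left q p) hdvd) with h | h
    · exact h
    · exfalso
      have h1 : q ∣ 1 := (Nat.dvd_add_right (dvd_pow_self q (by norm_num : (3:ℕ) ≠ 0))).mp
        (by rwa [Nat.add_comm] at h)
      have := Nat.le_of_dvd one_pos h1
      have := hq.two_le
      omega
  rcases hp.eq_two_or_odd' with rfl | hodd
  · -- p = 2 : q ∣ 9, so q = 3
    have h9 : q ∣ 3^2 := by simpa using hq3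
    have h3 : q ∣ 3 := hq.dvd_of_dvd_pow h9
    have : q = 3 := (Nat.prime_dvd_prime_iff_eq hq Nat.prime_three).mp h3
    omega
  · -- p odd, p ≥ 3
    exfalso
    have hp2 : p ≠ 2 := by rintro rfl; exact (by norm_num : ¬ Odd 2) hodd
    have hp3' : 3 ≤ p := by have := hp.two_le; omega
    have hq2 : q ≠ 2 := by have := hp.two_le; omega
    have hqodd : Odd q := hq.odd_of_ne_two hq2
    -- cast to ℤ
    have hqZ : Prime (q:ℤ) := Nat.prime_iff_prime_int.mp hq
    have hpZ : Prime (p:ℤ) := Nat.prime_iff_prime_int.mp hp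
    have hq3Z : (q:ℤ) ∣ ((p:ℤ)+1) * ((p:ℤ)^2 - p + 1) := by
      have := Int.natCast_dvd_natCast.mpr hq3
      push_cast at this
      convert this using 1; ring
    have hp3Z : (p:ℤ) ∣ ((q:ℤ)+1) * ((q:ℤ)^2 - q + 1) := by
      have := Int.natCast_dvd_natCast.mpr hp3
      push_cast at this
      convert this using 1; ring
    rcases hqZ.dvd_mul.mp hq3Z with h | hqd
    · -- q ∣ p + 1 : forces q = p + 1, even prime > 3, impossible
      have h' : q ∣ p + 1 := by exact_mod_cast h
      have hle := Nat.le_of_dvd (by omega) h'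
      have : q = p + 1 := by omega
      obtain ⟨t, ht⟩ := hodd
      have : 2 ∣ q := ⟨t + 1, by omega⟩
      have := (Nat.Prime.eq_one_or_self_of_dvd hq 2 this)
      omega
    rcases hpZ.dvd_mul.mp hp3Z with h | hpd
    · -- p ∣ q + 1 : counting contradiction
      obtain ⟨m, hm⟩ := h
      have hm2 : 2 ≤ m := by
        have hppos : (0:ℤ) < p := by exact_mod_cast hp.pos
        have hqgt : (p:ℤ) < q := by exact_mod_cast hpq
        nlinarith
      obtain ⟨c, hcc⟩ := hqd
      have hppos : (3:ℤ) ≤ p := by exact_mod_cast hp3'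
      have hqgt : (p:ℤ) < q := by exact_mod_cast hpq
      have hcpos : 0 < c := by nlinarith
      have hpc : (p:ℤ) ∣ c + 1 := ⟨m*c - p + 1, by nlinarith⟩
      have : (p:ℤ) ≤ c + 1 := Int.le_of_dvd (by omega) hpc
      -- q ≥ 2p - 1 and c ≥ p - 1 give q*c > p² - p + 1
      have hq2p : 2*(p:ℤ) - 1 ≤ q := by nlinarith
      nlinarith
    · -- the mutual divisibility case: impossible by descent
      exact no_mutual p (by omega) q hpq hqd hpd
end

section
/- If n = 2^α · p where α ≥ 1, p is an odd prime, and n divides σ₃(n), then n is an even perfect number, i.e., n = 2^{s−1}(2^s − 1) for some s such that 2^s − 1 is prime. -/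
/-- If `n = 2^α · p` with `α ≥ 1`, `p` an odd prime, and `n ∣ σ₃(n)`, then `n`
is an even perfect number, i.e. `n = 2^(s-1) * (2^s - 1)` with `2^s - 1` prime. -/
theorem stmt_7 (n α p : ℕ) (hα : 1 ≤ α) (hp : p.Prime) (hodd : Odd p)
    (hn : n = 2 ^ α * p) (hdvd : n ∣ ArithmeticFunction.sigma 3 n) :
    ∃ s : ℕ, (2 ^ s - 1).Prime ∧ n = 2 ^ (s - 1) * (2 ^ s - 1) := by
  subst hn
  obtain ⟨m, rfl⟩ := hodd
  have hm1 : 1 ≤ m := by have := hp.two_le; omega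
  have hcop : Nat.Coprime (2^α) (2*m+1) :=
    Nat.Coprime.pow_left _ (Nat.coprime_two_left.mpr ⟨m, rfl⟩)
  set S : ℕ := ∑ i ∈ Finset.range (α+1), 8^i with hSdef
  have hsig2 : ArithmeticFunction.sigma 3 (2^α) = S := by
    rw [ArithmeticFunction.sigma_apply, Nat.divisors_prime_pow Nat.prime_two, Finset.sum_map]
    apply Finset.sum_congr rfl
    intro i _
    simp only [Function.Embedding.coeFn_mk, ← pow_mul]
    rw [show (8:ℕ) = 2^3 by norm_num, ← pow_mul, mul_comm]
  have hsigp : ArithmeticFunction.sigma 3 (2*m+1) = 1 + (2*m+1)^3 := by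
    rw [ArithmeticFunction.sigma_apply, hp.divisors]
    rw [Finset.sum_insert (by simp [Ne.symm hp.ne_one]; omega), Finset.sum_singleton, one_pow]
  rw [ArithmeticFunction.IsMultiplicative.map_mul_of_coprime
    ArithmeticFunction.isMultiplicative_sigma hcop, hsig2, hsigp] at hdvd
  -- p ∣ S
  have hpS : (2*m+1) ∣ S := by
    have h1 : (2*m+1) ∣ S * (1 + (2*m+1)^3) := (dvd_mul_left _ _).trans hdvd
    rcases hp.dvd_mul.mp h1 with h | h
    · exact h
    · exfalso
      have h2 : (2*m+1) ∣ 1 := by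
        have := Nat.dvd_sub h (dvd_pow_self (2*m+1) (by norm_num : (3:ℕ) ≠ 0))
        simpa using this
      have := Nat.le_of_dvd one_pos h2
      omega
  -- S is odd
  have hSodd : S % 2 = 1 := by
    have hpeel : S = (∑ i ∈ Finset.range α, 8^(i+1)) + 1 := by
      rw [hSdef, Finset.sum_range_succ']
      norm_num
    have h8 : 2 ∣ ∑ i ∈ Finset.range α, 8^(i+1) := by
      apply Finset.dvd_sum
      intro i _
      exact dvd_trans (by norm_num) (dvd_pow_self 8 (Nat.succ_ne_zero i))
    omega
  -- 2^α ∣ p + 1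
  have h2a : 2^α ∣ 2*m+2 := by
    have h1 : 2^α ∣ S * (1 + (2*m+1)^3) := (dvd_mul_right _ _).trans hdvd
    have hcS : Nat.Coprime (2^α) S :=
      Nat.Coprime.pow_left _ (Nat.coprime_two_left.mpr (Nat.odd_iff.mpr hSodd))
    have h2 : 2^α ∣ 1 + (2*m+1)^3 := hcS.dvd_of_dvd_mul_left h1
    have hfac : 1 + (2*m+1)^3 = (2*m+2) * (4*m^2+2*m+1) := by ring
    rw [hfac] at h2
    have hcodd : Nat.Coprime (2^α) (4*m^2+2*m+1) :=
      Nat.Coprime.pow_left _ (Nat.coprime_two_left.mpr ⟨2*m^2+m, by ring⟩)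
    exact hcodd.dvd_of_dvd_mul_right h2
  obtain ⟨t, ht⟩ := h2a
  have ht1 : 1 ≤ t := by
    rcases Nat.eq_zero_or_pos t with rfl | h
    · simp at ht
    · exact h
  have h2le : 2 ≤ 2^α := by
    calc (2:ℕ) = 2^1 := rfl
    _ ≤ 2^α := Nat.pow_le_pow_right (by norm_num) hα
  have hp2t : 2*t ≤ 2*m+2 := by
    rw [ht]; exact Nat.mul_le_mul_right t h2le
  -- integer part : p ∣ (t-2)(t²+2t+4)
  have hpZ : Prime ((2*m+1 : ℕ) : ℤ) := Nat.prime_iff_prime_int.mp hp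
  have hS7 : (S:ℤ) * 7 = 8^(α+1) - 1 := by
    rw [hSdef]
    push_cast
    have := geom_sum_mul (8:ℤ) (α+1)
    norm_num at this
    linarith
  have hdvd8 : ((2*m+1:ℕ):ℤ) ∣ 8^(α+1) - 1 := by
    rw [← hS7]
    exact Dvd.dvd.mul_right (Int.natCast_dvd_natCast.mpr hpS) 7
  have htZ : (2*(m:ℤ)+2) = 2^α * t := by exact_mod_cast ht
  have hkey : ((2*m+1:ℕ):ℤ) ∣ ((t:ℤ) - 2) * ((t:ℤ)^2 + 2*t + 4) := by
    have h1 : ((2*m+1:ℕ):ℤ) ∣ (t:ℤ)^3 * (8^(α+1) - 1) := hdvd8.mul_left _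
    have h2 : ((2*m+1:ℕ):ℤ) ∣ ((2*(m:ℤ)+2)^3 * 8 - 8) :=
      ⟨((2*(m:ℤ)+1)^2 + 3*(2*(m:ℤ)+1) + 3)*8, by push_cast; ring⟩
    have h3 := dvd_sub h2 h1
    have h8 : (8:ℤ)^(α+1) = (2^α)^3 * 8 := by
      rw [pow_succ, show (8:ℤ) = 2^3 by norm_num, ← pow_mul, ← pow_mul, mul_comm α 3]
    have heq : ((2*(m:ℤ)+2)^3 * 8 - 8) - ((t:ℤ)^3 * (8^(α+1) - 1))
        = ((t:ℤ) - 2) * ((t:ℤ)^2 + 2*t + 4) := by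
      rw [h8]
      linear_combination (8*((2*(m:ℤ)+2)^2 + (2*(m:ℤ)+2)*((2:ℤ)^α*t) + ((2:ℤ)^α*t)^2)) * htZ
    rwa [heq] at h3
  by_cases ht2 : t = 2
  · -- the perfect number case
    subst ht2
    refine ⟨α+1, ?_, ?_⟩
    · have he : 2^(α+1) - 1 = 2*m+1 := by
        have h := pow_succ 2 α
        omega
      rw [he]; exact hp
    · have he : 2^(α+1) - 1 = 2*m+1 := by
        have h := pow_succ 2 α
        omega
      rw [Nat.add_sub_cancel, he]
  · exfalso
    rcases hpZ.dvd_mul.mp hkey with hc | hc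
    · rcases Nat.lt_or_ge t 2 with h | h
      · have h1 : t = 1 := by omega
        subst h1
        have h2 : ((2*m+1:ℕ):ℤ) ∣ 1 := by
          have := hc.neg_right
          norm_num at this
          exact this
        have := Int.natCast_dvd_natCast.mp h2
        have := Nat.le_of_dvd one_pos this
        omega
      · have h3 : 3 ≤ t := by omega
        have hcast : ((t:ℤ) - 2) = ((t - 2 : ℕ) : ℤ) := by
          rw [Nat.cast_sub (by omega)]; norm_num
        rw [hcast] at hc
        have hc' : (2*m+1) ∣ (t-2) := Int.natCast_dvd_natCast.mp hc
        have := Nat.le_of_dvd (by omega) hc'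
        omega
    · have hc' : (2*m+1) ∣ (t^2+2*t+4) := by
        have hcast : ((t:ℤ)^2+2*t+4) = ((t^2+2*t+4 : ℕ):ℤ) := by push_cast; ring
        rw [hcast] at hc
        exact Int.natCast_dvd_natCast.mp hc
      obtain ⟨k, hk⟩ := hc'
      have hk1 : 1 ≤ k := by
        rcases Nat.eq_zero_or_pos k with rfl | h
        · simp at hk
        · exact h
      have hdt : t ∣ k + 4 := by
        have h1 : t ∣ (2*m+2) * k := ⟨2^α * k, by rw [ht]; ring⟩
        have h2 : t ∣ t^2 + 2*t := ⟨t+2, by ring⟩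
        have h3 : (2*m+2)*k = (t^2+2*t) + (k+4) := by
          have : (2*m+2)*k = (2*m+1)*k + k := by ring
          omega
        have h4 := Nat.dvd_sub h1 h2
        rw [show (2*m+2)*k - (t^2+2*t) = k + 4 by omega] at h4
        exact h4
      have htk : t ≤ k + 4 := Nat.le_of_dvd (by omega) hdt
      have hbound : k * 2^α ≤ 2*k + 10 := by
        have h1 : k * (2^α * t) = t^2+2*t+4+k := by
          rw [← ht]
          have : k*(2*m+2) = (2*m+1)*k + k := by ring
          omega
        have h2 : t*t ≤ t*(k+4) := Nat.mul_le_mul_left t htk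
        have h2' : t^2 = t*t := sq t
        have h3 : k+4 ≤ t*(k+4) := Nat.le_mul_of_pos_left _ (by omega)
        have h4 : k * (2^α * t) ≤ t * (2*k + 10) := by nlinarith
        have h5 : (k * 2^α) * t ≤ (2*k + 10) * t := by
          calc (k * 2^α) * t = k * (2^α * t) := by ring
          _ ≤ t * (2*k+10) := h4
          _ = (2*k+10) * t := by ring
        exact Nat.le_of_mul_le_mul_right h5 (by omega)
      have hα3 : α ≤ 3 := by
        by_contra h
        have h16 : (16:ℕ) ≤ 2^α := by
          calc (16:ℕ) = 2^4 := rfl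
          _ ≤ 2^α := Nat.pow_le_pow_right (by norm_num) (by omega)
        nlinarith
      interval_cases α
      · -- α = 1, S = 9
        have hS9 : S = 9 := by rw [hSdef]; decide
        rw [hS9] at hpS
        have h1 : (2*m+1) ∣ 3^2 := by norm_num at hpS ⊢; exact hpS
        have h2 := hp.dvd_of_dvd_pow h1
        have h3 := (Nat.prime_dvd_prime_iff_eq hp (by norm_num)).mp h2
        omega
      · -- α = 2, S = 73
        have hS73 : S = 73 := by rw [hSdef]; decide
        rw [hS73] at hpS
        have h3 := (Nat.prime_dvd_prime_iff_eq hp (by norm_num)).mp hpS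
        omega
      · -- α = 3, S = 585 = 3^2 * (5 * 13)
        have hS585 : S = 585 := by rw [hSdef]; decide
        rw [hS585] at hpS
        have h1 : (2*m+1) ∣ 3^2 * (5 * 13) := by norm_num at hpS ⊢; exact hpS
        rcases hp.dvd_mul.mp h1 with h | h
        · have h2 := hp.dvd_of_dvd_pow h
          have h3 := (Nat.prime_dvd_prime_iff_eq hp (by norm_num)).mp h2
          omega
        · rcases hp.dvd_mul.mp h with h | h
          · have h3 := (Nat.prime_dvd_prime_iff_eq hp (by norm_num)).mp h
            omega
          · have h3 := (Nat.prime_dvd_prime_iff_eq hp (by norm_num)).mp h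
            omega
end

section
/- If n is an even perfect number with n ≠ 28, then n divides σ₃(n). -/
namespace Stmt8Aux

open ArithmeticFunction Finset Nat
open scoped ArithmeticFunction.sigma

theorem sigma_two_pow_eq_mersenne_succ (k : ℕ) : σ 1 (2 ^ k) = mersenne (k + 1) := by
  simp_rw [sigma_one_apply, mersenne, show 2 = 1 + 1 from rfl, ← geom_sum_mul_add 1 (k + 1)]
  norm_num

theorem eq_two_pow_mul_odd {n : ℕ} (hpos : 0 < n) : ∃ k m : ℕ, n = 2 ^ k * m ∧ ¬Even m := by
  have h := Nat.finiteMultiplicity_iff.2 ⟨Nat.prime_two.ne_one, hpos⟩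
  cases' pow_multiplicity_dvd 2 n with m hm
  use multiplicity 2 n, m
  refine ⟨hm, ?_⟩
  rw [even_iff_two_dvd]
  have hg := h.not_pow_dvd_of_multiplicity_lt (Nat.lt_succ_self _)
  contrapose! hg
  rcases hg with ⟨k, rfl⟩
  apply Dvd.intro k
  rw [pow_succ, mul_assoc, ← hm]

/-- **Perfect Number Theorem** (Euler's direction). -/
theorem eq_two_pow_mul_prime_mersenne_of_even_perfect {n : ℕ} (ev : Even n) (perf : Nat.Perfect n) :
    ∃ k : ℕ, Nat.Prime (mersenne (k + 1)) ∧ n = 2 ^ k * mersenne (k + 1) := by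
  have hpos := perf.2
  rcases eq_two_pow_mul_odd hpos with ⟨k, m, rfl, hm⟩
  use k
  rw [even_iff_two_dvd] at hm
  rw [Nat.perfect_iff_sum_divisors_eq_two_mul hpos, ← sigma_one_apply,
    isMultiplicative_sigma.map_mul_of_coprime (Nat.prime_two.coprime_pow_of_not_dvd hm).symm,
    sigma_two_pow_eq_mersenne_succ, ← mul_assoc, ← pow_succ'] at perf
  obtain ⟨j, rfl⟩ := ((Odd.coprime_two_right (by simp)).pow_right _).dvd_of_dvd_mul_left
    (Dvd.intro _ perf)
  rw [← mul_assoc, mul_comm _ (mersenne _), mul_assoc] at perf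
  have h := mul_left_cancel₀ (by positivity) perf
  rw [sigma_one_apply, Nat.sum_divisors_eq_sum_properDivisors_add_self, ← succ_mersenne, add_mul,
    one_mul, add_comm] at h
  have hj := add_left_cancel h
  cases Nat.sum_properDivisors_dvd (by rw [hj]; apply Dvd.intro_left (mersenne (k + 1)) rfl) with
  | inl h_1 =>
    have j1 : j = 1 := Eq.trans hj.symm h_1
    rw [j1, mul_one, Nat.sum_properDivisors_eq_one_iff_prime] at h_1
    simp [h_1, j1]
  | inr h_1 =>
    have jcon := Eq.trans hj.symm h_1
    rw [← one_mul j, ← mul_assoc, mul_one] at jcon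
    have jcon2 := mul_right_cancel₀ ?_ jcon
    · exfalso
      match k with
      | 0 =>
        apply hm
        rw [← jcon2, pow_zero, one_mul, one_mul] at ev
        rw [← jcon2, one_mul]
        exact even_iff_two_dvd.mp ev
      | .succ k =>
        apply _root_.ne_of_lt _ jcon2
        simp only [mersenne]
        rw [← Nat.pred_eq_sub_one, Nat.lt_pred_iff, ← pow_one (Nat.succ 1)]
        apply pow_lt_pow_right₀ (Nat.lt_succ_self 1) (Nat.succ_lt_succ k.succ_pos)
    contrapose! hm
    simp [hm]

theorem seven_mul_sigma_three_two_pow (k : ℕ) :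
    7 * ArithmeticFunction.sigma 3 (2 ^ k) = (2 ^ (k + 1)) ^ 3 - 1 ^ 3 := by
  rw [ArithmeticFunction.sigma_apply_prime_pow Nat.prime_two]
  induction k with
  | zero => norm_num
  | succ m ih =>
    rw [Finset.sum_range_succ, Nat.mul_add, ih]
    have h3 : (1 : ℕ) ≤ (2 ^ (m + 1)) ^ 3 := Nat.one_le_pow _ _ (by positivity)
    have h4 : (2 ^ (m + 1 + 1) : ℕ) ^ 3 = 8 * (2 ^ (m + 1)) ^ 3 := by ring
    have h5 : (2 : ℕ) ^ ((m + 1) * 3) = (2 ^ (m + 1)) ^ 3 := by rw [pow_mul]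
    rw [h4, h5]; omega

end Stmt8Aux

/-- If `n` is an even perfect number with `n ≠ 28`, then `n ∣ σ₃(n)`. -/
theorem stmt_8 (n : ℕ) (hperf : Nat.Perfect n) (heven : Even n) (h28 : n ≠ 28) :
    n ∣ ArithmeticFunction.sigma 3 n := by
  obtain ⟨k, hp, hn⟩ := Stmt8Aux.eq_two_pow_mul_prime_mersenne_of_even_perfect heven hperf
  set p := mersenne (k + 1) with hpdef
  have hp1 : p + 1 = 2 ^ (k + 1) := by
    have h1 : 1 ≤ 2 ^ (k + 1) := Nat.one_le_two_pow
    simp only [hpdef, mersenne]; omega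
  have hodd : Odd p := by
    refine Nat.Even.sub_odd Nat.one_le_two_pow ?_ odd_one
    exact (Nat.even_pow' (Nat.succ_ne_zero k)).mpr even_two
  have hcop : Nat.Coprime (2 ^ k) p :=
    Nat.Coprime.pow_left _ (Nat.coprime_two_left.mpr hodd)
  have hmul : ArithmeticFunction.sigma 3 n =
      ArithmeticFunction.sigma 3 (2 ^ k) * ArithmeticFunction.sigma 3 p := by
    rw [hn, ArithmeticFunction.isMultiplicative_sigma.map_mul_of_coprime hcop]
  have hsp : ArithmeticFunction.sigma 3 p = p ^ 3 + 1 := by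
    rw [ArithmeticFunction.sigma_apply, hp.divisors, Finset.sum_pair hp.one_lt.ne]
    rw [add_comm]; norm_num
  have hne7 : p ≠ 7 := by
    intro h
    apply h28
    have h8 : (2 : ℕ) ^ (k + 1) = 2 ^ 3 := by omega
    have hk2 : k = 2 := by
      have := Nat.pow_right_injective (le_refl 2) h8
      omega
    simp [hn, hk2, hpdef, mersenne]
  -- p divides σ₃(2^k)
  have hpd : p ∣ ArithmeticFunction.sigma 3 (2 ^ k) := by
    have hd : p ∣ 7 * ArithmeticFunction.sigma 3 (2 ^ k) := by
      have h1 : p ∣ (2 ^ (k + 1)) ^ 3 - 1 ^ 3 := by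
        have := Nat.sub_dvd_pow_sub_pow (2 ^ (k + 1)) 1 3
        simpa [hpdef, mersenne] using this
      rw [Stmt8Aux.seven_mul_sigma_three_two_pow k]; exact h1
    have hc7 : Nat.Coprime p 7 := (Nat.coprime_primes hp (by norm_num)).mpr hne7
    exact Nat.Coprime.dvd_of_dvd_mul_left hc7 hd
  -- 2^k divides p^3 + 1
  have h2d : 2 ^ k ∣ p ^ 3 + 1 := by
    have hid : p ^ 3 + 1 = (p + 1) * (p * p + 1) - (p + 1) * p := by
      have : (p + 1) * (p * p + 1) = (p ^ 3 + 1) + (p + 1) * p := by ring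
      omega
    rw [hid]
    exact Nat.dvd_sub (Dvd.dvd.mul_right (by rw [hp1]; exact pow_dvd_pow 2 (Nat.le_succ k)) _)
      (Dvd.dvd.mul_right (by rw [hp1]; exact pow_dvd_pow 2 (Nat.le_succ k)) _)
  rw [hmul, hsp, hn, mul_comm (ArithmeticFunction.sigma 3 (2 ^ k))]
  exact Nat.mul_dvd_mul h2d hpd
end

section
/- 28 does not divide σ₃(28), and 28 is the only even perfect number n for which n does not divide σ₃(n). -/
open ArithmeticFunction Finset
open scoped ArithmeticFunction.sigma

namespace Stmt9Aux

theorem sigma_two_pow_eq_mersenne_succ (k : ℕ) : σ 1 (2 ^ k) = mersenne (k + 1) := by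
  simp_rw [sigma_one_apply, mersenne, show 2 = 1 + 1 from rfl, ← geom_sum_mul_add 1 (k + 1)]
  norm_num

theorem eq_two_pow_mul_odd {n : ℕ} (hpos : 0 < n) : ∃ k m : ℕ, n = 2 ^ k * m ∧ ¬Even m := by
  have h := Nat.finiteMultiplicity_iff.2 ⟨Nat.prime_two.ne_one, hpos⟩
  cases' pow_multiplicity_dvd 2 n with m hm
  use multiplicity 2 n, m
  refine ⟨hm, ?_⟩
  rw [even_iff_two_dvd]
  have hg := h.not_pow_dvd_of_multiplicity_lt (Nat.lt_succ_self _)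
  contrapose! hg
  rcases hg with ⟨k, rfl⟩
  apply Dvd.intro k
  rw [pow_succ, mul_assoc, ← hm]

theorem eq_two_pow_mul_prime_mersenne_of_even_perfect {n : ℕ} (ev : Even n) (perf : Nat.Perfect n) :
    ∃ k : ℕ, Nat.Prime (mersenne (k + 1)) ∧ n = 2 ^ k * mersenne (k + 1) := by
  have hpos := perf.2
  rcases eq_two_pow_mul_odd hpos with ⟨k, m, rfl, hm⟩
  use k
  rw [even_iff_two_dvd] at hm
  rw [Nat.perfect_iff_sum_divisors_eq_two_mul hpos, ← sigma_one_apply,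
    isMultiplicative_sigma.map_mul_of_coprime (Nat.prime_two.coprime_pow_of_not_dvd hm).symm,
    sigma_two_pow_eq_mersenne_succ, ← mul_assoc, ← pow_succ'] at perf
  obtain ⟨j, rfl⟩ := ((Odd.coprime_two_right (by simp)).pow_right _).dvd_of_dvd_mul_left
    (Dvd.intro _ perf)
  rw [← mul_assoc, mul_comm _ (mersenne _), mul_assoc] at perf
  have h := mul_left_cancel₀ (by positivity) perf
  rw [sigma_one_apply, Nat.sum_divisors_eq_sum_properDivisors_add_self, ← succ_mersenne, add_mul,
    one_mul, add_comm] at h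
  have hj := add_left_cancel h
  cases Nat.sum_properDivisors_dvd (by rw [hj]; apply Dvd.intro_left (mersenne (k + 1)) rfl) with
  | inl h_1 =>
    have j1 : j = 1 := Eq.trans hj.symm h_1
    rw [j1, mul_one, Nat.sum_properDivisors_eq_one_iff_prime] at h_1
    simp [h_1, j1]
  | inr h_1 =>
    have jcon := Eq.trans hj.symm h_1
    rw [← one_mul j, ← mul_assoc, mul_one] at jcon
    have jcon2 := mul_right_cancel₀ ?_ jcon
    · exfalso
      match k with
      | 0 =>
        apply hm
        rw [← jcon2, pow_zero, one_mul, one_mul] at ev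
        rw [← jcon2, one_mul]
        exact even_iff_two_dvd.mp ev
      | .succ k =>
        apply ne_of_lt _ jcon2
        rw [mersenne, ← Nat.pred_eq_sub_one, Nat.lt_pred_iff, ← pow_one (Nat.succ 1)]
        apply pow_lt_pow_right₀ (Nat.lt_succ_self 1) (Nat.succ_lt_succ k.succ_pos)
    contrapose! hm
    simp [hm]

/-- The key divisibility: if `p = mersenne (k+1)` is a prime other than 7, then
the even perfect number `2^k * p` divides `σ₃` of itself. -/
theorem dvd_sigma_three (k : ℕ) (hp : Nat.Prime (mersenne (k + 1)))
    (h7 : mersenne (k + 1) ≠ 7) :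
    2 ^ k * mersenne (k + 1) ∣ σ 3 (2 ^ k * mersenne (k + 1)) := by
  set p := mersenne (k + 1) with hpdef
  have hp1 : p + 1 = 2 ^ (k + 1) := succ_mersenne (k + 1)
  have hpodd : Odd p := by
    refine Nat.Even.sub_odd ?_ ?_ odd_one
    · exact Nat.one_le_two_pow
    · exact (Nat.even_pow).2 ⟨even_two, Nat.succ_ne_zero k⟩
  have hcop : Nat.Coprime (2 ^ k) p := Nat.Coprime.pow_left k hpodd.coprime_two_right.symm
  rw [isMultiplicative_sigma.map_mul_of_coprime hcop]
  -- σ 3 p = 1 + p ^ 3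
  have hσp : σ 3 p = 1 + p ^ 3 := by
    rw [sigma_apply, hp.divisors, Finset.sum_insert (by simp [hp.one_lt.ne]),
      Finset.sum_singleton, one_pow]
  -- 2 ^ k divides σ 3 p
  have h2 : (2 : ℕ) ^ k ∣ σ 3 p := by
    rw [hσp]
    have hd : ((p : ℤ) + 1) ∣ ((1 : ℤ) + p ^ 3) := ⟨p ^ 2 - p + 1, by ring⟩
    have hd' : (p + 1) ∣ (1 + p ^ 3) := by exact_mod_cast hd
    exact dvd_trans (by rw [hp1]; exact pow_dvd_pow 2 (Nat.le_succ k)) hd'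
  -- p divides σ 3 (2 ^ k)
  have h3 : p ∣ σ 3 (2 ^ k) := by
    have hS : σ 3 (2 ^ k) = ∑ i ∈ range (k + 1), 8 ^ i := by
      rw [sigma_apply, Nat.sum_divisors_prime_pow Nat.prime_two]
      refine Finset.sum_congr rfl fun i _ => ?_
      rw [← pow_mul, mul_comm, pow_mul]
      norm_num
    have h7S : (p : ℤ) ∣ 7 * (∑ i ∈ range (k + 1), (8 : ℤ) ^ i) := by
      have hg : (∑ i ∈ range (k + 1), (8 : ℤ) ^ i) * (8 - 1) = 8 ^ (k + 1) - 1 :=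
        geom_sum_mul 8 (k + 1)
      have h8 : (8 : ℤ) ^ (k + 1) = ((p : ℤ) + 1) ^ 3 := by
        have : ((2 : ℤ)) ^ (k + 1) = (p : ℤ) + 1 := by exact_mod_cast hp1.symm
        calc (8 : ℤ) ^ (k + 1) = ((2 : ℤ) ^ (k + 1)) ^ 3 := by
              rw [← pow_mul, mul_comm, pow_mul]; norm_num
          _ = ((p : ℤ) + 1) ^ 3 := by rw [this]
      refine ⟨(p : ℤ) ^ 2 + 3 * p + 3, ?_⟩
      have := hg
      rw [h8] at this
      linarith [this]
    have h7S' : p ∣ 7 * σ 3 (2 ^ k) := by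
      have : (p : ℤ) ∣ 7 * (σ 3 (2 ^ k) : ℤ) := by
        rw [hS]; push_cast; exact h7S
      exact_mod_cast this
    have hcop7 : Nat.Coprime p 7 := (Nat.coprime_primes hp (by norm_num)).2 h7
    exact hcop7.dvd_of_dvd_mul_left h7S'
  calc 2 ^ k * p ∣ σ 3 p * σ 3 (2 ^ k) := mul_dvd_mul h2 h3
    _ = σ 3 (2 ^ k) * σ 3 p := mul_comm _ _

end Stmt9Aux

/-- `28` does not divide `σ₃(28)`, and `28` is the only even perfect number `n`
with `n ∤ σ₃(n)`. -/
theorem stmt_9 :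
    ¬ (28 ∣ ArithmeticFunction.sigma 3 28) ∧
      ∀ n : ℕ, Nat.Perfect n → Even n → ¬ (n ∣ ArithmeticFunction.sigma 3 n) → n = 28 := by
  constructor
  · have h : ArithmeticFunction.sigma 3 28 = 25112 := by
      rw [ArithmeticFunction.sigma_apply]
      decide
    rw [h]
    decide
  · intro n hperf heven hndvd
    obtain ⟨k, hp, rfl⟩ :=
      Stmt9Aux.eq_two_pow_mul_prime_mersenne_of_even_perfect heven hperf
    by_cases h7 : mersenne (k + 1) = 7
    · have hk : 2 ^ (k + 1) = 2 ^ 3 := by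
        rw [← succ_mersenne, h7]
        norm_num
      have : k + 1 = 3 := Nat.pow_right_injective (le_refl 2) hk
      have hk2 : k = 2 := by omega
      subst hk2
      rw [h7]
      norm_num
    · exact absurd (Stmt9Aux.dvd_sigma_three k hp h7) hndvd
end

section
/- Let d be a positive odd integer. The equation x² − d·y² = −4 has a solution in integers x, y if and only if the equation u² − d·v² = −1 has a solution in integers u, v. -/
/-- For a positive odd integer `d`, `x² - d·y² = -4` has an integer solution iff
`u² - d·v² = -1` has an integer solution. -/
theorem stmt_10 (d : ℤ) (hd : 0 < d) (hodd : Odd d) :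
    (∃ x y : ℤ, x ^ 2 - d * y ^ 2 = -4) ↔ (∃ u v : ℤ, u ^ 2 - d * v ^ 2 = -1) := by
  constructor
  · rintro ⟨x, y, h⟩
    rcases Int.even_or_odd x with ⟨a, ha⟩ | ⟨a, ha⟩ <;>
      rcases Int.even_or_odd y with ⟨b, hb⟩ | ⟨b, hb⟩
    · -- both even
      subst ha hb
      refine ⟨a, b, ?_⟩
      have h4 : 4 * (a ^ 2 - d * b ^ 2) = -4 := by linear_combination h
      linarith
    · -- x even, y odd: d would be even, contradiction
      exfalso
      subst ha hb
      have hde : Even d :=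
        ⟨2 * (a ^ 2 - d * b ^ 2 - d * b + 1), by linear_combination -h⟩
      exact (Int.not_odd_iff_even.mpr hde) hodd
    · -- x odd, y even: impossible mod 4
      exfalso
      subst ha hb
      have h4 : 4 * (a ^ 2 + a - d * b ^ 2) + 1 = -4 := by linear_combination h
      generalize a ^ 2 + a - d * b ^ 2 = t at h4
      omega
    · -- both odd: cubing trick
      subst ha hb
      obtain ⟨c, hc⟩ : Even (a * (a + 1)) := Int.even_mul_succ_self a
      obtain ⟨e, he⟩ : Even (b * (b + 1)) := Int.even_mul_succ_self b
      have hd8 : d = 8 * (c - d * e) + 5 := by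
        linear_combination -h + 4 * hc - 4 * d * he
      set f : ℤ := c - d * e with hf
      set M : ℤ := c + 2 + 24 * f * e + 3 * f + 15 * e with hMdef
      set N : ℤ := 3 * c + 1 + 8 * f * e + f + 5 * e with hNdef
      have hM : (2 * a + 1) ^ 2 + 3 * d * (2 * b + 1) ^ 2 = 8 * M := by
        rw [hMdef]
        linear_combination 4 * hc + (12 * d) * he + (24 * e + 3) * hd8
      have hN : 3 * (2 * a + 1) ^ 2 + d * (2 * b + 1) ^ 2 = 8 * N := by
        rw [hNdef]
        linear_combination 12 * hc + (4 * d) * he + (8 * e + 1) * hd8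
      refine ⟨(2 * a + 1) * M, (2 * b + 1) * N, ?_⟩
      have key : 64 * (((2 * a + 1) * M) ^ 2 - d * ((2 * b + 1) * N) ^ 2) =
          ((2 * a + 1) ^ 2 - d * (2 * b + 1) ^ 2) ^ 3 := by
        linear_combination
          (-(2 * a + 1) ^ 2 * ((2 * a + 1) ^ 2 + 3 * d * (2 * b + 1) ^ 2 + 8 * M)) * hM +
          (d * (2 * b + 1) ^ 2 * (3 * (2 * a + 1) ^ 2 + d * (2 * b + 1) ^ 2 + 8 * N)) * hN
      rw [h] at key
      linarith
  · rintro ⟨u, v, h⟩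
    exact ⟨2 * u, 2 * v, by linear_combination 4 * h⟩
end

section
/- If d is a positive odd integer and integers x, y satisfy x² − d·y² = −4, then u = x(x² + 3)/2 and v = (x² + 1)y/2 are integers satisfying u² − d·v² = −1. -/
/-- If `d` is a positive odd integer and `x² - d·y² = -4`, then
`u = x(x²+3)/2` and `v = (x²+1)y/2` are integers with `u² - d·v² = -1`. -/
theorem stmt_11 (d x y : ℤ) (hd : 0 < d) (hodd : Odd d)
    (h : x ^ 2 - d * y ^ 2 = -4) :
    (2 : ℤ) ∣ x * (x ^ 2 + 3) ∧ (2 : ℤ) ∣ (x ^ 2 + 1) * y ∧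
      (x * (x ^ 2 + 3) / 2) ^ 2 - d * ((x ^ 2 + 1) * y / 2) ^ 2 = -1 := by
  obtain ⟨e, he⟩ := hodd
  have h1 : (2 : ℤ) ∣ x * (x ^ 2 + 3) := by
    rcases Int.even_or_odd x with ⟨a, ha⟩ | ⟨a, ha⟩
    · exact ⟨a * (x ^ 2 + 3), by rw [ha]; ring⟩
    · exact ⟨x * (2 * a ^ 2 + 2 * a + 2), by rw [ha]; ring⟩
  have h2 : (2 : ℤ) ∣ (x ^ 2 + 1) * y := by
    rcases Int.even_or_odd x with ⟨a, ha⟩ | ⟨a, ha⟩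
    · -- x even ⇒ y even since d odd
      have hy : (2 : ℤ) ∣ y := by
        rcases Int.even_or_odd y with ⟨b, hb⟩ | ⟨b, hb⟩
        · exact ⟨b, by omega⟩
        · exfalso
          have : (2 : ℤ) ∣ 1 := ⟨2 * a ^ 2 + 2 - (2 * e + 1) * (2 * b ^ 2 + 2 * b) - e,
            by subst ha hb he; nlinarith [h]⟩
          omega
      obtain ⟨b, hb⟩ := hy
      exact ⟨(x ^ 2 + 1) * b, by rw [hb]; ring⟩
    · exact ⟨(2 * a ^ 2 + 2 * a + 1) * y, by rw [ha]; ring⟩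
  refine ⟨h1, h2, ?_⟩
  obtain ⟨u, hu⟩ := h1
  obtain ⟨v, hv⟩ := h2
  have hue : x * (x ^ 2 + 3) / 2 = u := by omega
  have hve : (x ^ 2 + 1) * y / 2 = v := by omega
  rw [hue, hve]
  have key : 4 * (u ^ 2 - d * v ^ 2) = 4 * (-1 : ℤ) := by
    linear_combination (-(x * (x ^ 2 + 3) + 2 * u)) * hu +
      d * ((x ^ 2 + 1) * y + 2 * v) * hv + (x ^ 2 + 1) ^ 2 * h
  linarith
end

section
/- The positive integer solutions of 1 + x² + y² = 3xy with 1 ≤ x < y are exactly the pairs (x, y) = (F_{2k−1}, F_{2k+1}) for k ≥ 1. -/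
lemma fib_rec_12 (j : ℕ) :
    Nat.fib (2*j+1) + Nat.fib (2*j+5) = 3 * Nat.fib (2*j+3) := by
  have h2 : Nat.fib (2*j+2) = Nat.fib (2*j) + Nat.fib (2*j+1) := Nat.fib_add_two
  have h3 : Nat.fib (2*j+3) = Nat.fib (2*j+1) + Nat.fib (2*j+2) := Nat.fib_add_two
  have h4 : Nat.fib (2*j+4) = Nat.fib (2*j+2) + Nat.fib (2*j+3) := Nat.fib_add_two
  have h5 : Nat.fib (2*j+5) = Nat.fib (2*j+3) + Nat.fib (2*j+4) := Nat.fib_add_two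
  omega

lemma fib_eqn_12 (j : ℕ) :
    1 + Nat.fib (2*j+1) ^ 2 + Nat.fib (2*j+3) ^ 2
      = 3 * Nat.fib (2*j+1) * Nat.fib (2*j+3) := by
  induction j with
  | zero => norm_num
  | succ n ih =>
    have hrec := fib_rec_12 n
    set a := Nat.fib (2*n+1)
    set b := Nat.fib (2*n+3)
    set c := Nat.fib (2*n+5)
    have hgoal : 2*(n+1)+1 = 2*n+3 := by ring
    have hgoal2 : 2*(n+1)+3 = 2*n+5 := by ring
    rw [hgoal, hgoal2]
    have ih' : (1 : ℤ) + (a:ℤ)^2 + (b:ℤ)^2 = 3*a*b := by exact_mod_cast ih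
    have hrec' : (a:ℤ) + c = 3*b := by exact_mod_cast hrec
    have : (1 : ℤ) + (b:ℤ)^2 + (c:ℤ)^2 = 3*b*c := by
      linear_combination ih' + ((c:ℤ) - a) * hrec'
    exact_mod_cast this

lemma fwd_12 : ∀ n x y : ℕ, y ≤ n → 1 ≤ x → x < y →
    1 + x ^ 2 + y ^ 2 = 3 * x * y →
    ∃ k : ℕ, 1 ≤ k ∧ x = Nat.fib (2 * k - 1) ∧ y = Nat.fib (2 * k + 1) := by
  intro n
  induction n with
  | zero => intro x y hy hx hxy _; omega
  | succ n ih =>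
    intro x y hy hx hxy heq
    rcases Nat.lt_or_ge x 2 with hx1 | hx2
    · -- x = 1
      have hx1 : x = 1 := by omega
      subst hx1
      have hy2 : y = 2 := by nlinarith
      exact ⟨1, le_refl 1, by simp, by rw [hy2]; rfl⟩
    · -- x ≥ 2, Vieta jump
      have hylt : y < 3 * x := by nlinarith
      set x' := 3 * x - y with hx'def
      have hsum : x' + y = 3 * x := by omega
      have heq' : 1 + x' ^ 2 + x ^ 2 = 3 * x' * x := by
        have h1 : (1 : ℤ) + (x:ℤ)^2 + (y:ℤ)^2 = 3*x*y := by exact_mod_cast heq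
        have h2 : (x':ℤ) + y = 3*x := by exact_mod_cast hsum
        have : (1 : ℤ) + (x':ℤ)^2 + (x:ℤ)^2 = 3*x'*x := by
          linear_combination h1 + ((x':ℤ) - y) * h2
        exact_mod_cast this
      have hx'pos : 1 ≤ x' := by nlinarith
      have hx'lt : x' < x := by nlinarith
      obtain ⟨k, hk, hxk, hyk⟩ := ih x' x (by omega) hx'pos hx'lt heq'
      refine ⟨k + 1, by omega, ?_, ?_⟩
      · rw [show 2*(k+1)-1 = 2*k+1 from by omega]; exact hyk
      · -- y = 3*x - x' = fib (2k+3)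
        obtain ⟨j, rfl⟩ : ∃ j, k = j + 1 := ⟨k - 1, by omega⟩
        have hrec := fib_rec_12 j
        have h1 : x' = Nat.fib (2*j+1) := by rw [show 2*j+1 = 2*(j+1)-1 from by omega]; exact hxk
        have h2 : x = Nat.fib (2*j+3) := by rw [show 2*j+3 = 2*(j+1)+1 from by ring]; exact hyk
        have : y = Nat.fib (2*j+5) := by omega
        rw [this, show 2*(j+1+1)+1 = 2*j+5 from by ring]

/-- The solutions of `1 + x² + y² = 3xy` with `1 ≤ x < y` are exactly the pairs
`(x, y) = (F_{2k-1}, F_{2k+1})` for `k ≥ 1`. -/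
theorem stmt_12 (x y : ℕ) (hx : 1 ≤ x) (hxy : x < y) :
    1 + x ^ 2 + y ^ 2 = 3 * x * y ↔
      ∃ k : ℕ, 1 ≤ k ∧ x = Nat.fib (2 * k - 1) ∧ y = Nat.fib (2 * k + 1) := by
  constructor
  · intro heq
    exact fwd_12 y x y le_rfl hx hxy heq
  · rintro ⟨k, hk, rfl, rfl⟩
    obtain ⟨j, rfl⟩ : ∃ j, k = j + 1 := ⟨k - 1, by omega⟩
    have h := fib_eqn_12 j
    have e1 : 2*(j+1)-1 = 2*j+1 := by omega
    have e2 : 2*(j+1)+1 = 2*j+3 := by ring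
    rw [e1, e2]
    exact h
end

section
/- If k is a positive integer with k ≠ 3, then the equation 1 + x² + y² = k·x·y has no solution in positive integers x, y. -/
lemma descent15 (k x y : ℤ) (hy : 0 < y) (hyx : y < x)
    (heq : 1 + x ^ 2 + y ^ 2 = k * x * y) :
    ∃ x', 0 < x' ∧ x' < x ∧ 1 + x' ^ 2 + y ^ 2 = k * x' * y := by
  refine ⟨k * y - x, ?_, ?_, ?_⟩
  · have hmul : (k * y - x) * x = y ^ 2 + 1 := by nlinarith
    nlinarith [sq_nonneg y]
  · have hmul : (k * y - x) * x = y ^ 2 + 1 := by nlinarith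
    nlinarith
  · nlinarith

lemma keyZ (k : ℤ) : ∀ n : ℕ, ∀ x y : ℤ, (x + y).toNat ≤ n → 0 < x → 0 < y →
    1 + x ^ 2 + y ^ 2 = k * x * y → k = 3 := by
  intro n
  induction n with
  | zero => intro x y hn hx hy _; omega
  | succ n ih =>
    intro x y hn hx hy heq
    rcases lt_trichotomy x y with h | h | h
    · obtain ⟨y', hy'pos, hy'lt, heq'⟩ := descent15 k y x hx h (by ring_nf; ring_nf at heq; linarith)
      exact ih x y' (by omega) hx hy'pos (by ring_nf; ring_nf at heq'; linarith)
    · subst h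
      have h1 : x ^ 2 * (k - 2) = 1 := by ring_nf; nlinarith
      have := Int.eq_one_of_mul_eq_one_right (by positivity) h1
      rw [this, one_mul] at h1; omega
    · obtain ⟨x', hx'pos, hx'lt, heq'⟩ := descent15 k x y hy h heq
      exact ih x' y (by omega) hx'pos hy heq'

/-- If `k` is a positive integer with `k ≠ 3`, then `1 + x² + y² = kxy` has no
solution in positive integers. -/
theorem stmt_15 (k : ℕ) (hk : 0 < k) (hk3 : k ≠ 3) :
    ¬ ∃ x y : ℕ, 0 < x ∧ 0 < y ∧ 1 + x ^ 2 + y ^ 2 = k * x * y := by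
  rintro ⟨x, y, hx, hy, heq⟩
  have hZ : (1 : ℤ) + (x : ℤ) ^ 2 + (y : ℤ) ^ 2 = (k : ℤ) * x * y := by exact_mod_cast heq
  have := keyZ (k : ℤ) ((x : ℤ) + (y : ℤ)).toNat x y le_rfl
    (by exact_mod_cast hx) (by exact_mod_cast hy) hZ
  exact hk3 (by exact_mod_cast this)
end

section
/- If k is an even positive integer, then the equation 1 + x² + y² = k·x·y has no solution in positive integers x, y. -/
/-- If `k` is an even positive integer, then `1 + x² + y² = kxy` has no solution
in positive integers. -/
theorem stmt_16 (k : ℕ) (hk : 0 < k) (hke : Even k) :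
    ¬ ∃ x y : ℕ, 0 < x ∧ 0 < y ∧ 1 + x ^ 2 + y ^ 2 = k * x * y := by
  rintro ⟨x, y, hx, hy, h⟩
  obtain ⟨m, rfl⟩ := hke
  have h4 : ((1 + x ^ 2 + y ^ 2 : ℕ) : ZMod 4) = (((m + m) * x * y : ℕ) : ZMod 4) := by
    exact_mod_cast congrArg _ h
  push_cast at h4
  have key : ∀ a b c : ZMod 4, 1 + a ^ 2 + b ^ 2 ≠ (c + c) * a * b := by decide
  exact key x y m h4
end

section
/- If x and y are positive integers with y ≥ 2 such that xy − 1 divides x² − x + 1, then (x² − x + 1)/(xy − 1) = 1, i.e., x² − x + 1 = xy − 1. -/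
/-- If `x, y` are positive integers with `y ≥ 2` and `xy - 1 ∣ x² - x + 1`,
then `x² - x + 1 = xy - 1`. -/
theorem stmt_18 (x y : ℕ) (hx : 0 < x) (hy : 2 ≤ y)
    (h : x * y - 1 ∣ x ^ 2 - x + 1) : x ^ 2 - x + 1 = x * y - 1 := by
  have hxy : 1 ≤ x * y := by nlinarith
  have hxx : x ≤ x ^ 2 := by nlinarith
  zify [hxx, hxy] at h ⊢
  obtain ⟨q, hq⟩ := h
  have hx' : (1:ℤ) ≤ x := by exact_mod_cast hx
  have hy' : (2:ℤ) ≤ y := by exact_mod_cast hy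
  have hq1 : 1 ≤ q := by
    by_contra h'
    push_neg at h'
    have hq0 : q ≤ 0 := by linarith
    nlinarith [mul_nonneg (by nlinarith : (0:ℤ) ≤ (x:ℤ)*y - 1) (by linarith : (0:ℤ) ≤ -q)]
  obtain ⟨k, hk⟩ : (x:ℤ) ∣ q + 1 := ⟨(y : ℤ)*q - x + 1, by linear_combination hq⟩
  have hk1 : 1 ≤ k := by
    by_contra h'
    push_neg at h'
    have hk0 : k ≤ 0 := by linarith
    nlinarith [mul_nonneg (by linarith : (0:ℤ) ≤ (x:ℤ)) (by linarith : (0:ℤ) ≤ -k)]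
  have hxk : (2:ℤ) ≤ x * k := by linarith
  have hrel : ((x:ℤ)*k - 1) * ((y:ℤ) - 1) = x + k - k*x := by
    have hxne : (x:ℤ) ≠ 0 := by linarith
    apply mul_left_cancel₀ hxne
    linear_combination (1 - (x:ℤ)*y) * hk - hq
  have hq2 : q ≤ 1 := by
    nlinarith [mul_nonneg (by linarith : (0:ℤ) ≤ (x:ℤ)*k - 1) (by linarith : (0:ℤ) ≤ (y:ℤ) - 2),
      mul_nonneg (by linarith : (0:ℤ) ≤ k - 1) (by linarith : (0:ℤ) ≤ (x:ℤ) - 1)]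
  have hq3 : q = 1 := le_antisymm hq2 hq1
  subst hq3
  linear_combination hq
end

section
/- If x and y are positive integers with x ≥ y such that x divides y² − y + 1 and y divides x² − x + 1, then x = y = 1. -/
lemma key_19 (x : ℕ) : ∀ y : ℕ, 0 < y → y ≤ x →
    (x : ℤ) ∣ (y : ℤ)^2 - y + 1 → (y : ℤ) ∣ (x : ℤ)^2 - x + 1 → x = 1 ∧ y = 1 := by
  induction x using Nat.strong_induction_on with
  | _ x ih =>
    intro y hy hxy h1 h2
    rcases eq_or_lt_of_le hxy with heq | hlt
    · subst heq
      have hd1 : (y : ℤ) ∣ 1 := by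
        have hd : (y : ℤ) ∣ (y : ℤ)^2 - y := ⟨(y : ℤ) - 1, by ring⟩
        have := dvd_sub h2 hd
        simpa using this
      have hy1 : y = 1 := by
        have h := Int.le_of_dvd one_pos hd1
        omega
      exact ⟨hy1, hy1⟩
    · -- x > y
      have hx0 : (0:ℤ) < x := by exact_mod_cast hy.trans_le hxy
      obtain ⟨m, hm⟩ := h1
      have hN : (0:ℤ) < (y : ℤ)^2 - y + 1 := by
        have : (1:ℤ) ≤ y := by exact_mod_cast hy
        nlinarith
      have hm0 : 0 < m := by
        by_contra h
        push_neg at h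
        nlinarith
      have hmy : m < (y : ℤ) := by
        have hxy' : (y:ℤ) + 1 ≤ x := by exact_mod_cast hlt
        have h1y : (1:ℤ) ≤ y := by exact_mod_cast hy
        nlinarith
      obtain ⟨a, ha⟩ := h2
      have hb : (m : ℤ) * x - 1 = y * (y - 1) := by linarith [hm]
      have hdm : (y : ℤ) ∣ m^2 - m + 1 :=
        ⟨m^2 * a - (y-1) * (m*x+1) + m*(y-1), by linear_combination m^2*ha - (m*x+1)*hb + m*hb⟩
      set m' := m.toNat with hm'
      have hmm : (m' : ℤ) = m := Int.toNat_of_nonneg hm0.le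
      have hres := ih y hlt m' (by omega) (by omega)
        (by rw [hmm]; exact hdm) (by rw [hmm]; exact ⟨x, by linarith [hm]⟩)
      obtain ⟨hy1, hm1⟩ := hres
      have : (x : ℤ) = 1 := by
        have hmq : (m : ℤ) = 1 := by rw [← hmm, hm1]; norm_num
        subst hy1
        rw [hmq] at hm
        push_cast at hm
        linarith
      have hx1 : x = 1 := by exact_mod_cast this
      exact ⟨hx1, hy1⟩

/-- If positive integers `x ≥ y` satisfy `x ∣ y² - y + 1` and `y ∣ x² - x + 1`,
then `x = y = 1`. -/
theorem stmt_19 (x y : ℕ) (hy : 0 < y) (hxy : y ≤ x)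
    (h1 : x ∣ y ^ 2 - y + 1) (h2 : y ∣ x ^ 2 - x + 1) : x = 1 ∧ y = 1 := by
  have hyy : y ≤ y ^ 2 := Nat.le_self_pow two_ne_zero y
  have hxx : x ≤ x ^ 2 := Nat.le_self_pow two_ne_zero x
  have h1' : (x : ℤ) ∣ (y : ℤ)^2 - y + 1 := by
    have := Int.natCast_dvd_natCast.mpr h1
    rwa [show ((y ^ 2 - y + 1 : ℕ) : ℤ) = (y : ℤ)^2 - y + 1 by push_cast [hyy]; ring] at this
  have h2' : (y : ℤ) ∣ (x : ℤ)^2 - x + 1 := by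
    have := Int.natCast_dvd_natCast.mpr h2
    rwa [show ((x ^ 2 - x + 1 : ℕ) : ℤ) = (x : ℤ)^2 - x + 1 by push_cast [hxx]; ring] at this
  exact key_19 x y hy hxy h1' h2'
end
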